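/- (Chain rule for directed information, second form) Let (X^n, Y^n, Z^n) be jointly distributed random sequences with finite alphabets. Then I(X^n→(Y^n,Z^n)) = I(X^n→Y^n‖DZ^n) + I(X^n→Z^n‖Y^n), where I(X^n→(Y^n,Z^n)) := Σ_{i=1}^n I(X^i; Y_i, Z_i | Y^{i-1}, Z^{i-1}), I(X^n→Y^n‖DZ^n) := Σ_{i=1}^n I(X^i; Y_i | Y^{i-1}, Z^{i-1}), and I(X^n→Z^n‖Y^n) := Σ_{i=1}^n I(X^i; Z_i | Z^{i-1}, Y^i). -/

import Mathlib

open Finset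

noncomputable section

-- Probability of the event `E` under the pmf `p` on a finite sample space `Ω`.
open Classical in
def pr {Ω : Type*} [Fintype Ω] (p : Ω → ℝ) (E : Ω → Prop) : ℝ :=
  ∑ ω, if E ω then p ω else 0

-- Shannon entropy `H(U)` (pointwise form).
def entropy {Ω α : Type*} [Fintype Ω] (p : Ω → ℝ) (U : Ω → α) : ℝ :=
  -∑ ω, p ω * Real.log (pr p (fun ω' => U ω' = U ω))

-- Conditional Shannon entropy `H(U | V)`.
def condEntropy {Ω α β : Type*} [Fintype Ω] (p : Ω → ℝ) (U : Ω → α) (V : Ω → β) : ℝ :=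
  -∑ ω, p ω * Real.log
      (pr p (fun ω' => U ω' = U ω ∧ V ω' = V ω) / pr p (fun ω' => V ω' = V ω))

-- Mutual information `I(U ; V)`.
def mutualInfo {Ω α β : Type*} [Fintype Ω] (p : Ω → ℝ) (U : Ω → α) (V : Ω → β) : ℝ :=
  ∑ ω, p ω * Real.log
      (pr p (fun ω' => U ω' = U ω ∧ V ω' = V ω) /
        (pr p (fun ω' => U ω' = U ω) * pr p (fun ω' => V ω' = V ω)))

-- Conditional mutual information `I(U ; V | W)`.
def condMutualInfo {Ω α β γ : Type*} [Fintype Ω] (p : Ω → ℝ)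
    (U : Ω → α) (V : Ω → β) (W : Ω → γ) : ℝ :=
  ∑ ω, p ω * Real.log
      ((pr p (fun ω' => U ω' = U ω ∧ V ω' = V ω ∧ W ω' = W ω) *
          pr p (fun ω' => W ω' = W ω)) /
        (pr p (fun ω' => U ω' = U ω ∧ W ω' = W ω) *
          pr p (fun ω' => V ω' = V ω ∧ W ω' = W ω)))

-- The prefix `(X_0, …, X_{i-1})` of a random sequence `X`.
def prefixSeq {Ω 𝒳 : Type*} (X : Ω → ℕ → 𝒳) (i : ℕ) : Ω → (Fin i → 𝒳) :=
  fun ω j => X ω (j : ℕ)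

-- Directed information `I(X^n → Y^n) = ∑_{i=1}^n I(X^i ; Y_i | Y^{i-1})` (0-indexed).
def directedInfo {Ω 𝒳 𝒴 : Type*} [Fintype Ω] (p : Ω → ℝ)
    (X : Ω → ℕ → 𝒳) (Y : Ω → ℕ → 𝒴) (n : ℕ) : ℝ :=
  ∑ i ∈ Finset.range n,
    condMutualInfo p (prefixSeq X (i + 1)) (fun ω => Y ω i) (prefixSeq Y i)


lemma pr_nonneg {Ω : Type*} [Fintype Ω] (p : Ω → ℝ) (hp0 : ∀ ω, 0 ≤ p ω)
    (E : Ω → Prop) : 0 ≤ pr p E := by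
  classical
  unfold pr
  exact Finset.sum_nonneg fun ω _ => by split <;> simp [hp0 ω]

lemma pr_pos {Ω : Type*} [Fintype Ω] (p : Ω → ℝ) (hp0 : ∀ ω, 0 ≤ p ω)
    {E : Ω → Prop} {ω : Ω} (hω : 0 < p ω) (hE : E ω) : 0 < pr p E := by
  classical
  unfold pr
  have h1 : (if E ω then p ω else 0) ≤ ∑ ω', if E ω' then p ω' else 0 :=
    Finset.single_le_sum (f := fun ω' => if E ω' then p ω' else 0)
      (fun ω' _ => by by_cases h : E ω' <;> simp [h, hp0 ω']) (Finset.mem_univ ω)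
  simp only [hE, if_true] at h1
  exact lt_of_lt_of_le hω h1

lemma pr_congr {Ω : Type*} [Fintype Ω] (p : Ω → ℝ) {E F : Ω → Prop}
    (h : ∀ ω, E ω ↔ F ω) : pr p E = pr p F := by
  classical
  unfold pr
  exact Finset.sum_congr rfl fun ω _ => by rw [if_congr (h ω) rfl rfl]

lemma cmi_chain {Ω α β γ δ ε : Type*} [Fintype Ω] (p : Ω → ℝ) (hp0 : ∀ ω, 0 ≤ p ω)
    (U : Ω → α) (V1 : Ω → β) (V2 : Ω → γ) (W : Ω → δ) (W2 : Ω → ε)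
    (hW2 : ∀ ω ω', W2 ω' = W2 ω ↔ (V1 ω' = V1 ω ∧ W ω' = W ω)) :
    condMutualInfo p U (fun ω => (V1 ω, V2 ω)) W =
      condMutualInfo p U V1 W + condMutualInfo p U V2 W2 := by
  classical
  unfold condMutualInfo
  rw [← Finset.sum_add_distrib]
  refine Finset.sum_congr rfl fun ω _ => ?_
  by_cases hω : p ω = 0
  · simp [hω]
  have hpω : 0 < p ω := lt_of_le_of_ne (hp0 ω) (Ne.symm hω)
  set a := pr p (fun ω' => U ω' = U ω ∧ (V1 ω', V2 ω') = (V1 ω, V2 ω) ∧ W ω' = W ω) with ha_def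
  set b := pr p (fun ω' => W ω' = W ω) with hb_def
  set c := pr p (fun ω' => U ω' = U ω ∧ W ω' = W ω) with hc_def
  set d := pr p (fun ω' => (V1 ω', V2 ω') = (V1 ω, V2 ω) ∧ W ω' = W ω) with hd_def
  set e := pr p (fun ω' => U ω' = U ω ∧ V1 ω' = V1 ω ∧ W ω' = W ω) with he_def
  set f := pr p (fun ω' => V1 ω' = V1 ω ∧ W ω' = W ω) with hf_def
  have h1 : pr p (fun ω' => U ω' = U ω ∧ V2 ω' = V2 ω ∧ W2 ω' = W2 ω) = a := by
    refine pr_congr p fun ω' => ?_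
    rw [hW2]
    simp only [Prod.mk.injEq]
    tauto
  have h2 : pr p (fun ω' => W2 ω' = W2 ω) = f := by
    refine pr_congr p fun ω' => ?_
    rw [hW2]
  have h3 : pr p (fun ω' => U ω' = U ω ∧ W2 ω' = W2 ω) = e := by
    refine pr_congr p fun ω' => ?_
    rw [hW2]
  have h4 : pr p (fun ω' => V2 ω' = V2 ω ∧ W2 ω' = W2 ω) = d := by
    refine pr_congr p fun ω' => ?_
    rw [hW2]
    simp only [Prod.mk.injEq]
    tauto
  rw [h1, h2, h3, h4]
  have hap : 0 < a := pr_pos p hp0 hpω ⟨rfl, rfl, rfl⟩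
  have hbp : 0 < b := pr_pos p hp0 hpω rfl
  have hcp : 0 < c := pr_pos p hp0 hpω ⟨rfl, rfl⟩
  have hdp : 0 < d := pr_pos p hp0 hpω ⟨rfl, rfl⟩
  have hep : 0 < e := pr_pos p hp0 hpω ⟨rfl, rfl, rfl⟩
  have hfp : 0 < f := pr_pos p hp0 hpω ⟨rfl, rfl⟩
  have key : a * b / (c * d) = (e * b / (c * f)) * (a * f / (e * d)) := by
    field_simp
  rw [key, Real.log_mul (by positivity) (by positivity), mul_add]

/-- chain rule for directed information, second form:
`I(X^n→(Y^n,Z^n)) = I(X^n→Y^n‖DZ^n) + I(X^n→Z^n‖Y^n)`. -/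
theorem directedInfo_chain_rule_second
    {Ω 𝒳 𝒴 𝒵 : Type*} [Fintype Ω] [Fintype 𝒳] [Fintype 𝒴] [Fintype 𝒵]
    (p : Ω → ℝ) (hp0 : ∀ ω, 0 ≤ p ω) (hp1 : ∑ ω, p ω = 1)
    (X : Ω → ℕ → 𝒳) (Y : Ω → ℕ → 𝒴) (Z : Ω → ℕ → 𝒵) (n : ℕ) :
    ∑ i ∈ Finset.range n,
        condMutualInfo p (prefixSeq X (i + 1))
          (fun ω => (Y ω i, Z ω i))
          (fun ω => (prefixSeq Y i ω, prefixSeq Z i ω)) =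
      (∑ i ∈ Finset.range n,
          condMutualInfo p (prefixSeq X (i + 1)) (fun ω => Y ω i)
            (fun ω => (prefixSeq Y i ω, prefixSeq Z i ω))) +
        ∑ i ∈ Finset.range n,
          condMutualInfo p (prefixSeq X (i + 1)) (fun ω => Z ω i)
            (fun ω => (prefixSeq Z i ω, prefixSeq Y (i + 1) ω)) := by
  rw [← Finset.sum_add_distrib]
  refine Finset.sum_congr rfl fun i _ => ?_
  refine cmi_chain p hp0 _ _ _ _ _ fun ω ω' => ?_
  simp only [Prod.mk.injEq]
  constructor
  · rintro ⟨hz, hy⟩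
    refine ⟨congrFun hy (Fin.last i), ?_, hz⟩
    funext j
    exact congrFun hy j.castSucc
  · rintro ⟨hyi, ⟨hyp, hzp⟩⟩
    refine ⟨hzp, ?_⟩
    funext j
    by_cases h : (j : ℕ) < i
    · exact congrFun hyp ⟨j, h⟩
    · have hlt := j.isLt
      have hj : (j : ℕ) = i := by omega
      show Y ω' (j : ℕ) = Y ω (j : ℕ)
      rw [hj]; exact hyi
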